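/- Let (X,φ) be a compact metric flow without fixed points and Z ⊆ X a Borel set. Then h^P_top(φ,Z) ≥ sup{ h̄_μ(φ) : μ a Borel probability measure on X with μ(Z) = 1 }. -/

import Mathlib

open Set Filter Topology MeasureTheory ENNReal NNReal

variable {X : Type*}

def IsFlow [TopologicalSpace X] (φ : ℝ → X → X) : Prop :=
  Continuous (fun p : X × ℝ => φ p.2 p.1) ∧ (∀ x, φ 0 x = x) ∧
    ∀ s t : ℝ, ∀ x : X, φ (s + t) x = φ s (φ t x)

def FixedPointFree (φ : ℝ → X → X) : Prop := ∀ x : X, ∃ t : ℝ, φ t x ≠ x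

/-- A reparametrization on an interval `I` containing `0`: a continuous injective map
(hence a homeomorphism onto its image) with `α 0 = 0`. -/
def IsRepOn (I : Set ℝ) (α : ℝ → ℝ) : Prop :=
  ContinuousOn α I ∧ Set.InjOn α I ∧ α 0 = 0

def IsRep (t : ℝ) (α : ℝ → ℝ) : Prop := IsRepOn (Set.Icc 0 t) α

/-- Open reparametrization ball `B(x,t,ε,φ)`. -/
def repBall [MetricSpace X] (φ : ℝ → X → X) (x : X) (t ε : ℝ) : Set X :=
  {y | ∃ α : ℝ → ℝ, IsRep t α ∧ ∀ s ∈ Set.Icc 0 t, dist (φ (α s) x) (φ s y) < ε}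

/-- Closed reparametrization ball `B̄(x,t,ε,φ)`. -/
def repBallCl [MetricSpace X] (φ : ℝ → X → X) (x : X) (t ε : ℝ) : Set X :=
  {y | ∃ α : ℝ → ℝ, IsRep t α ∧ ∀ s ∈ Set.Icc 0 t, dist (φ (α s) x) (φ s y) ≤ ε}

/-- A (finite or countable) packing family: pairwise disjoint closed reparametrization balls
with centers in `Z` and times at least `N`. -/
def IsPackingFamily [MetricSpace X] (φ : ℝ → X → X) (Z : Set X) (ε : ℝ) (N : ℕ)
    (I : Set ℕ) (x : ℕ → X) (t : ℕ → ℝ) : Prop :=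
  (∀ i ∈ I, x i ∈ Z ∧ (N : ℝ) ≤ t i) ∧
    ∀ i ∈ I, ∀ j ∈ I, i ≠ j →
      Disjoint (repBallCl φ (x i) (t i) ε) (repBallCl φ (x j) (t j) ε)

/-- `P^s_{N,ε}(φ,Z)`. -/
noncomputable def packPre [MetricSpace X] (φ : ℝ → X → X) (Z : Set X) (s ε : ℝ) (N : ℕ) :
    ℝ≥0∞ :=
  ⨆ (x : ℕ → X) (t : ℕ → ℝ) (I : Set ℕ) (_ : IsPackingFamily φ Z ε N I x t),
    ∑' i : I, ENNReal.ofReal (Real.exp (-(s * t i)))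

/-- `P^s_ε(φ,Z) = lim_{N→∞} P^s_{N,ε}(φ,Z)` (the limit of a non-increasing sequence). -/
noncomputable def packP [MetricSpace X] (φ : ℝ → X → X) (Z : Set X) (s ε : ℝ) : ℝ≥0∞ :=
  ⨅ N : ℕ, packPre φ Z s ε N

/-- `𝒫^s_ε(Z)`. -/
noncomputable def packM [MetricSpace X] (φ : ℝ → X → X) (Z : Set X) (s ε : ℝ) : ℝ≥0∞ :=
  ⨅ (Zs : ℕ → Set X) (_ : Z ⊆ ⋃ i, Zs i), ∑' i, packP φ (Zs i) s ε

/-- `h^P_top(φ,Z,ε) = inf{s ≥ 0 : 𝒫^s_ε(Z) = 0}`. -/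
noncomputable def packEnt [MetricSpace X] (φ : ℝ → X → X) (Z : Set X) (ε : ℝ) : ℝ≥0∞ :=
  sInf (ENNReal.ofReal '' {s : ℝ | 0 ≤ s ∧ packM φ Z s ε = 0})

/-- `h^P_top(φ,Z) = lim_{ε→0} h^P_top(φ,Z,ε)` (the limit is the supremum by monotonicity). -/
noncomputable def packEntTop [MetricSpace X] (φ : ℝ → X → X) (Z : Set X) : ℝ≥0∞ :=
  ⨆ (ε : ℝ) (_ : 0 < ε), packEnt φ Z ε

/-- The canonical map `EReal → ℝ≥0∞` (sending negatives to `0` and `⊤` to `⊤`). -/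
noncomputable def erealToENNReal (x : EReal) : ℝ≥0∞ :=
  if x = ⊤ then ⊤ else ENNReal.ofReal x.toReal

/-- `limsup_{t→∞} −(1/t) log μ(B(x,t,ε,φ))`, as an extended nonnegative real. -/
noncomputable def upLocalEntAt [MetricSpace X] [MeasurableSpace X] (φ : ℝ → X → X) (μ : Measure X) (x : X)
    (ε : ℝ) : ℝ≥0∞ :=
  erealToENNReal (Filter.limsup
    (fun t : ℝ => ((t⁻¹ : ℝ) : EReal) * (-(ENNReal.log (μ (repBall φ x t ε)))))
    Filter.atTop)

/-- The upper local entropy `h̄_μ(φ,x)`; the limit as `ε → 0` is the supremum over `ε > 0`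
by monotonicity. -/
noncomputable def upLocalEnt [MetricSpace X] [MeasurableSpace X] (φ : ℝ → X → X) (μ : Measure X) (x : X) :
    ℝ≥0∞ :=
  ⨆ (ε : ℝ) (_ : 0 < ε), upLocalEntAt φ μ x ε

/-- The upper local entropy `h̄_μ(φ) = ∫ h̄_μ(φ,x) dμ(x)`. -/
noncomputable def upEnt [MetricSpace X] [MeasurableSpace X] (φ : ℝ → X → X) (μ : Measure X) : ℝ≥0∞ :=
  ∫⁻ x, upLocalEnt φ μ x ∂μ

/-- `ℳ^s_{N,ε}(φ,Z)` for Bowen entropy. -/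
noncomputable def bowenPre [MetricSpace X] (φ : ℝ → X → X) (Z : Set X) (s ε : ℝ) (N : ℕ) :
    ℝ≥0∞ :=
  ⨅ (x : ℕ → X) (t : ℕ → ℝ)
    (_ : (∀ i, (N : ℝ) ≤ t i) ∧ Z ⊆ ⋃ i, repBall φ (x i) (t i) ε),
    ∑' i, ENNReal.ofReal (Real.exp (-(s * t i)))

/-- `ℳ^s_ε(φ,Z) = lim_{N→∞} ℳ^s_{N,ε}(φ,Z)` (a non-decreasing limit). -/
noncomputable def bowenMeps [MetricSpace X] (φ : ℝ → X → X) (Z : Set X) (s ε : ℝ) : ℝ≥0∞ :=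
  ⨆ N : ℕ, bowenPre φ Z s ε N

/-- `ℳ^s(φ,Z) = lim_{ε→0} ℳ^s_ε(φ,Z)` (a non-decreasing limit as `ε` decreases). -/
noncomputable def bowenM [MetricSpace X] (φ : ℝ → X → X) (Z : Set X) (s : ℝ) : ℝ≥0∞ :=
  ⨆ (ε : ℝ) (_ : 0 < ε), bowenMeps φ Z s ε

/-- The Bowen topological entropy `h^B_top(φ,Z)`. -/
noncomputable def bowenEnt [MetricSpace X] (φ : ℝ → X → X) (Z : Set X) : ℝ≥0∞ :=
  sInf (ENNReal.ofReal '' {s : ℝ | 0 ≤ s ∧ bowenM φ Z s = 0})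

section Dev

variable [MetricSpace X]

/-! ### Flow basics -/

theorem IsFlow.contPair (hφ : IsFlow φ) : Continuous fun p : ℝ × X => φ p.1 p.2 := by
  have : (fun p : ℝ × X => φ p.1 p.2) = (fun p : X × ℝ => φ p.2 p.1) ∘ Prod.swap := rfl
  rw [this]
  exact hφ.1.comp continuous_swap

theorem IsFlow.contT (hφ : IsFlow φ) (t : ℝ) : Continuous fun x : X => φ t x :=
  hφ.contPair.comp (continuous_const.prodMk continuous_id)

theorem IsFlow.contX (hφ : IsFlow φ) (x : X) : Continuous fun t : ℝ => φ t x :=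
  hφ.contPair.comp (continuous_id.prodMk continuous_const)

theorem IsFlow.cancel (hφ : IsFlow φ) (a : ℝ) (w : X) : φ (-a) (φ a w) = w := by
  rw [← hφ.2.2, neg_add_cancel, hφ.2.1]

/-! ### Reparametrization ball basics -/

theorem isRep_id (t : ℝ) : IsRep t (fun s => s) :=
  ⟨continuousOn_id, Set.injOn_id _, rfl⟩

theorem mem_repBallCl_self (φ : ℝ → X → X) (x : X) {t ε : ℝ} (hε : 0 ≤ ε) :
    x ∈ repBallCl φ x t ε := by
  refine ⟨fun s => s, isRep_id t, fun s _ => ?_⟩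
  simp [hε]

theorem repBallCl_anti_time (φ : ℝ → X → X) (x : X) {t t' ε : ℝ} (ht : 0 ≤ t) (htt' : t ≤ t') :
    repBallCl φ x t' ε ⊆ repBallCl φ x t ε := by
  rintro y ⟨α, ⟨hc, hi, h0⟩, htr⟩
  exact ⟨α, ⟨hc.mono (Set.Icc_subset_Icc_right htt'), hi.mono (Set.Icc_subset_Icc_right htt'), h0⟩,
    fun s hs => htr s ⟨hs.1, hs.2.trans htt'⟩⟩

theorem repBall_anti_time (φ : ℝ → X → X) (x : X) {t t' ε : ℝ} (ht : 0 ≤ t) (htt' : t ≤ t') :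
    repBall φ x t' ε ⊆ repBall φ x t ε := by
  rintro y ⟨α, ⟨hc, hi, h0⟩, htr⟩
  exact ⟨α, ⟨hc.mono (Set.Icc_subset_Icc_right htt'), hi.mono (Set.Icc_subset_Icc_right htt'), h0⟩,
    fun s hs => htr s ⟨hs.1, hs.2.trans htt'⟩⟩

theorem repBall_mono_radius (φ : ℝ → X → X) (x : X) {t ε ε' : ℝ} (h : ε ≤ ε') :
    repBall φ x t ε ⊆ repBall φ x t ε' := by
  rintro y ⟨α, hα, htr⟩
  exact ⟨α, hα, fun s hs => lt_of_lt_of_le (htr s hs) h⟩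

theorem repBallCl_subset_repBall (φ : ℝ → X → X) (x : X) {t ε ε' : ℝ} (h : ε < ε') :
    repBallCl φ x t ε ⊆ repBall φ x t ε' := by
  rintro y ⟨α, hα, htr⟩
  exact ⟨α, hα, fun s hs => lt_of_le_of_lt (htr s hs) h⟩

end Dev
section Dev2

variable [MetricSpace X] [CompactSpace X] {φ : ℝ → X → X}

/-- Uniform small-time modulus: points move little in little time. -/
theorem IsFlow.mod_small (hφ : IsFlow φ) {η : ℝ} (hη : 0 < η) :
    ∃ r > 0, ∀ (w : X) (u : ℝ), |u| ≤ r → dist (φ u w) w ≤ η := by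
  by_contra hcon
  push_neg at hcon
  have key : ∀ n : ℕ, ∃ (w : X) (u : ℝ), |u| ≤ 1 / (n + 1) ∧ η < dist (φ u w) w := by
    intro n
    obtain ⟨w, u, hu, hd⟩ := hcon (1 / (n + 1)) (by positivity)
    exact ⟨w, u, hu, hd⟩
  choose w u hu hd using key
  obtain ⟨p, -, g, hg, hgp⟩ := isCompact_univ.tendsto_subseq (x := w) (fun n => Set.mem_univ _)
  have hu0 : Filter.Tendsto (fun n => u (g n)) Filter.atTop (nhds 0) := by
    rw [tendsto_iff_dist_tendsto_zero]
    simp only [dist_zero_right, Real.norm_eq_abs]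
    apply squeeze_zero (fun n => abs_nonneg _) (fun n => hu (g n))
    have h1 : Filter.Tendsto (fun n : ℕ => 1 / ((n : ℝ) + 1)) Filter.atTop (nhds 0) :=
      tendsto_one_div_add_atTop_nhds_zero_nat
    exact h1.comp hg.tendsto_atTop
  have hpair : Filter.Tendsto (fun n => (u (g n), w (g n))) Filter.atTop (nhds (0, p)) :=
    hu0.prodMk_nhds hgp
  have hcont : Continuous fun q : ℝ × X => dist (φ q.1 q.2) q.2 :=
    (hφ.contPair.dist continuous_snd)
  have hlim : Filter.Tendsto (fun n => dist (φ (u (g n)) (w (g n))) (w (g n)))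
      Filter.atTop (nhds (dist (φ 0 p) p)) := (hcont.tendsto _).comp hpair
  rw [hφ.2.1, dist_self] at hlim
  have : ∀ᶠ n in Filter.atTop, dist (φ (u (g n)) (w (g n))) (w (g n)) < η :=
    hlim.eventually_lt_const hη
  obtain ⟨n, hn⟩ := this.exists
  exact absurd (hd (g n)) (not_lt.2 hn.le)

/-- Uniform tracking modulus: close points stay close for a bounded time. -/
theorem IsFlow.mod_track (hφ : IsFlow φ) {U η : ℝ} (hU : 0 ≤ U) (hη : 0 < η) :
    ∃ δ > 0, ∀ x z : X, dist x z ≤ δ → ∀ u ∈ Set.Icc 0 U, dist (φ u x) (φ u z) ≤ η := by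
  by_contra hcon
  push_neg at hcon
  have key : ∀ n : ℕ, ∃ (x z : X) (u : ℝ), dist x z ≤ 1 / (n + 1) ∧ u ∈ Set.Icc 0 U ∧
      η < dist (φ u x) (φ u z) := by
    intro n
    obtain ⟨x, z, hxz, u, hu, hd⟩ := hcon (1 / (n + 1)) (by positivity)
    exact ⟨x, z, u, hxz, hu, hd⟩
  choose x z u hxz hu hd using key
  have hcpt : IsCompact ((Set.univ : Set X) ×ˢ (Set.univ : Set X) ×ˢ Set.Icc (0 : ℝ) U) :=
    isCompact_univ.prod (isCompact_univ.prod isCompact_Icc)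
  obtain ⟨⟨p, q, u₀⟩, hmem, g, hg, hgp⟩ := hcpt.tendsto_subseq
    (x := fun n => (x n, z n, u n)) (fun n => ⟨Set.mem_univ _, Set.mem_univ _, hu n⟩)
  rw [nhds_prod_eq, nhds_prod_eq] at hgp
  rw [Filter.tendsto_prod_iff'] at hgp
  obtain ⟨hx, hrest⟩ := hgp
  rw [Filter.tendsto_prod_iff'] at hrest
  obtain ⟨hz, huu⟩ := hrest
  -- p = q since dist x z → 0
  have hpq : p = q := by
    have h1 : Filter.Tendsto (fun n => dist (x (g n)) (z (g n))) Filter.atTop (nhds (dist p q)) :=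
      hx.dist hz
    have h2 : Filter.Tendsto (fun n => dist (x (g n)) (z (g n))) Filter.atTop (nhds 0) := by
      apply squeeze_zero (fun n => dist_nonneg) (fun n => hxz (g n))
      exact tendsto_one_div_add_atTop_nhds_zero_nat.comp hg.tendsto_atTop
    have := tendsto_nhds_unique h1 h2
    exact dist_eq_zero.1 this
  subst hpq
  have hcont : Continuous fun w : X × X × ℝ => dist (φ w.2.2 w.1) (φ w.2.2 w.2.1) :=
    Continuous.dist
      (hφ.contPair.comp ((continuous_snd.comp continuous_snd).prodMk continuous_fst))
      (hφ.contPair.comp ((continuous_snd.comp continuous_snd).prodMk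
        (continuous_fst.comp continuous_snd)))
  have hlim : Filter.Tendsto (fun n => dist (φ (u (g n)) (x (g n))) (φ (u (g n)) (z (g n))))
      Filter.atTop (nhds (dist (φ u₀ p) (φ u₀ p))) := by
    have htr : Filter.Tendsto (fun n => ((x (g n), z (g n), u (g n)) : X × X × ℝ))
        Filter.atTop (nhds (p, p, u₀)) := by
      rw [nhds_prod_eq, nhds_prod_eq, Filter.tendsto_prod_iff', Filter.tendsto_prod_iff']
      exact ⟨hx, hz, huu⟩
    exact (hcont.tendsto _).comp htr
  rw [dist_self] at hlim
  obtain ⟨n, hn⟩ := (hlim.eventually_lt_const hη).exists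
  exact absurd (hd (g n)) (not_lt.2 hn.le)

/-- No small periods: there is `τ > 0` such that no point is periodic with period in `(0, 2τ]`. -/
theorem IsFlow.no_small_periods (hφ : IsFlow φ) (hfpf : FixedPointFree φ) :
    ∃ τ > 0, ∀ (w : X) (a : ℝ), 0 < a → a ≤ 2 * τ → φ a w ≠ w := by
  by_contra hcon
  push_neg at hcon
  have key : ∀ n : ℕ, ∃ (w : X) (a : ℝ), 0 < a ∧ a ≤ 2 / (n + 1) ∧ φ a w = w := by
    intro n
    obtain ⟨w, a, ha, h2, he⟩ := hcon (1 / (n + 1)) (by positivity)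
    refine ⟨w, a, ha, ?_, he⟩
    calc a ≤ 2 * (1 / (n + 1)) := h2
    _ = 2 / (n + 1) := by ring
  choose w a hapos halt hper using key
  obtain ⟨p, -, g, hg, hgp⟩ := isCompact_univ.tendsto_subseq (x := w) (fun n => Set.mem_univ _)
  -- iterated periodicity
  have hiter : ∀ (n : ℕ) (j : ℕ), φ (j * a n) (w n) = w n := by
    intro n j
    induction j with
    | zero => simpa using hφ.2.1 (w n)
    | succ j ih =>
        have : ((j : ℝ) + 1) * a n = a n + j * a n := by ring
        rw [Nat.cast_succ, this, hφ.2.2, ih, hper]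
  -- every nonnegative time fixes p
  have hfix : ∀ t : ℝ, 0 ≤ t → φ t p = p := by
    intro t ht
    have hdist : ∀ η > 0, dist (φ t p) p ≤ 3 * η := by
      intro η hη
      obtain ⟨r, hr, hmod⟩ := hφ.mod_small hη
      -- eventually all three error terms are ≤ η
      have h1 : ∀ᶠ n in Filter.atTop, dist (φ t (w (g n))) (φ t p) ≤ η := by
        have := ((hφ.contT t).tendsto p).comp hgp
        exact (this.eventually (Metric.closedBall_mem_nhds _ hη)).mono
          (fun n hn => by simpa [dist_comm] using hn)
      have h3 : ∀ᶠ n in Filter.atTop, dist (w (g n)) p ≤ η :=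
        (hgp.eventually (Metric.closedBall_mem_nhds _ hη)).mono (fun n hn => by simpa using hn)
      have h4 : ∀ᶠ n in Filter.atTop, a (g n) ≤ r := by
        have h1 : Filter.Tendsto (fun n : ℕ => 2 / ((n : ℝ) + 1)) Filter.atTop (nhds 0) := by
          simpa [div_eq_mul_inv] using (tendsto_one_div_add_atTop_nhds_zero_nat).const_mul (2:ℝ)
        have h2 := (h1.comp hg.tendsto_atTop).eventually_le_const hr
        exact h2.mono fun n hn => (halt (g n)).trans hn
      obtain ⟨n, hn1, hn3, hn4⟩ := (h1.and (h3.and h4)).exists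
      -- φ t (w m) = φ rem (w m) where rem ∈ [0, a m)
      set m := g n
      have ham := hapos m
      set j : ℕ := ⌊t / a m⌋₊ with hj_def
      set rem : ℝ := t - j * a m with hrem_def
      have hrem0 : 0 ≤ rem := by
        have : (j : ℝ) ≤ t / a m := Nat.floor_le (by positivity)
        have := (mul_le_mul_of_nonneg_right this ham.le)
        rw [div_mul_cancel₀] at this
        · simpa [rem] using this
        · exact ham.ne'
      have hrem1 : rem ≤ a m := by
        have : t / a m < j + 1 := Nat.lt_floor_add_one _
        have := (mul_lt_mul_of_pos_right this ham).le
        rw [div_mul_cancel₀ _ ham.ne'] at this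
        rw [hrem_def]
        nlinarith
      have hsplit : φ t (w m) = φ rem (w m) := by
        have : t = rem + j * a m := by ring
        rw [this, hφ.2.2, hiter m j]
      have h2 : dist (φ t (w m)) (w m) ≤ η := by
        rw [hsplit]
        apply hmod
        rw [abs_of_nonneg hrem0]
        exact hrem1.trans hn4
      calc dist (φ t p) p ≤ dist (φ t p) (φ t (w m)) + dist (φ t (w m)) (w m) + dist (w m) p :=
            dist_triangle4 _ _ _ _
      _ ≤ η + η + η := by
            refine add_le_add (add_le_add ?_ h2) hn3
            rw [dist_comm]; exact hn1
      _ = 3 * η := by ring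
    by_contra hne
    have hpos : 0 < dist (φ t p) p := dist_pos.2 (fun h => hne h)
    have := hdist (dist (φ t p) p / 4) (by positivity)
    linarith
  -- all times fix p, contradicting fixed-point freeness
  obtain ⟨t, htne⟩ := hfpf p
  rcases le_or_gt 0 t with ht | ht
  · exact htne (hfix t ht)
  · have h1 : φ (-t) p = p := hfix (-t) (by linarith)
    have : φ t p = φ t (φ (-t) p) := by rw [h1]
    rw [← hφ.2.2, add_neg_cancel, hφ.2.1] at this
    exact htne this

/-- Uniform separation at scales `[τ, 2τ]`. -/
theorem IsFlow.period_sep (hφ : IsFlow φ) (hfpf : FixedPointFree φ) [Nonempty X] :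
    ∃ τ > 0, ∃ δ₁ > 0, ∀ (w : X) (a : ℝ), τ ≤ |a| → |a| ≤ 2 * τ → δ₁ ≤ dist (φ a w) w := by
  obtain ⟨τ, hτ, hper⟩ := hφ.no_small_periods hfpf
  refine ⟨τ, hτ, ?_⟩
  set K : Set ℝ := Set.Icc (-(2 * τ)) (-τ) ∪ Set.Icc τ (2 * τ) with hK
  have hKcpt : IsCompact K := (isCompact_Icc).union isCompact_Icc
  have hScpt : IsCompact ((Set.univ : Set X) ×ˢ K) := isCompact_univ.prod hKcpt
  have hSne : ((Set.univ : Set X) ×ˢ K).Nonempty := by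
    refine ⟨(Classical.arbitrary X, τ), Set.mem_univ _, Or.inr ⟨le_refl _, by linarith⟩⟩
  have hcont : ContinuousOn (fun q : X × ℝ => dist (φ q.2 q.1) q.1) (Set.univ ×ˢ K) :=
    (hφ.1.dist continuous_fst).continuousOn
  obtain ⟨⟨w₀, a₀⟩, hmem, hmin⟩ := hScpt.exists_isMinOn hSne hcont
  have hKprop : ∀ a ∈ K, ∀ w : X, φ a w ≠ w := by
    intro a ha w
    rcases ha with ha | ha
    · intro he
      have hna : 0 < -a := by have := ha.2; linarith
      have h2 : -a ≤ 2 * τ := by have := ha.1; linarith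
      have : φ (-a) w = w := by
        have h := congrArg (φ (-a)) he
        rw [← hφ.2.2, neg_add_cancel, hφ.2.1] at h
        exact h.symm
      exact hper w (-a) hna h2 this
    · exact hper w a (by linarith [ha.1]) ha.2
  have hδpos : 0 < dist (φ a₀ w₀) w₀ := by
    rw [dist_pos]
    exact fun h => hKprop a₀ hmem.2 w₀ h
  refine ⟨_, hδpos, fun w a h1 h2 => ?_⟩
  have haK : a ∈ K := by
    rcases abs_cases a with ⟨he, h0⟩ | ⟨he, h0⟩
    · exact Or.inr ⟨by rw [he] at h1; linarith, by rw [he] at h2; linarith⟩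
    · exact Or.inl ⟨by rw [he] at h2; linarith, by rw [he] at h1; linarith⟩
  exact isMinOn_iff.1 hmin (w, a) ⟨Set.mem_univ w, haK⟩

end Dev2
section Dev3

variable [MetricSpace X] [CompactSpace X] {φ : ℝ → X → X}

/-- The drift lemma: a reparametrization tracking an orbit drifts by less than `τ`
over any time window of length at most `U`. -/
theorem drift_lemma (hφ : IsFlow φ)
    {τ δ₁ U ε m : ℝ} {x z : X} {α : ℝ → ℝ}
    (hτ : 0 < τ) (hδ₁ : 0 < δ₁)
    (hsep : ∀ (w : X) (a : ℝ), τ ≤ |a| → |a| ≤ 2 * τ → δ₁ ≤ dist (φ a w) w)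
    (hmod : ∀ p q : X, dist p q ≤ ε → ∀ u ∈ Set.Icc 0 U, dist (φ u p) (φ u q) ≤ δ₁ / 3)
    (hε : ε ≤ δ₁ / 3)
    (hαc : ContinuousOn α (Set.Icc 0 m))
    (htr : ∀ s ∈ Set.Icc 0 m, dist (φ (α s) x) (φ s z) ≤ ε)
    {s u : ℝ} (hs : 0 ≤ s) (hu : 0 ≤ u) (huU : u ≤ U) (hsum : s + u ≤ m) :
    |α (s + u) - α s - u| < τ := by
  by_contra hcon
  push_neg at hcon
  set g : ℝ → ℝ := fun u' => |α (s + u') - α s - u'| with hg_def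
  have hgc : ContinuousOn g (Set.Icc 0 u) := by
    apply ContinuousOn.abs
    have hmapsto : Set.MapsTo (fun u' => s + u') (Set.Icc 0 u) (Set.Icc 0 m) := by
      intro u' hu'
      have h1 := hu'.1; have h2 := hu'.2
      constructor
      · show 0 ≤ s + u'; linarith
      · show s + u' ≤ m; linarith
    exact ((hαc.comp (Continuous.continuousOn (by continuity)) hmapsto).sub
      continuousOn_const).sub (Continuous.continuousOn (by continuity))
  have hg0 : g 0 = 0 := by simp [hg_def]
  have hmem : τ ∈ Set.Icc (g 0) (g u) := ⟨by rw [hg0]; exact hτ.le, hcon⟩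
  obtain ⟨u₀, hu₀, hgu₀⟩ := intermediate_value_Icc hu hgc hmem
  -- now derive a contradiction at u₀
  have hu₀m : s + u₀ ∈ Set.Icc 0 m := ⟨by linarith [hu₀.1], by linarith [hu₀.2]⟩
  set gv : ℝ := α (s + u₀) - α s - u₀ with hgv_def
  have habs : |gv| = τ := hgu₀
  have hsplit : φ (α s + u₀) x = φ (-gv) (φ (α (s + u₀)) x) := by
    rw [← hφ.2.2]
    congr 1
    rw [hgv_def]; ring
  have hlb : δ₁ ≤ dist (φ (α s + u₀) x) (φ (α (s + u₀)) x) := by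
    rw [hsplit]
    apply hsep
    · rw [abs_neg, habs]
    · rw [abs_neg, habs]; linarith
  have hub1 : dist (φ (α s + u₀) x) (φ (s + u₀) z) ≤ δ₁ / 3 := by
    have h1 : φ (α s + u₀) x = φ u₀ (φ (α s) x) := by
      rw [← hφ.2.2]; congr 1; ring
    have h2 : φ (s + u₀) z = φ u₀ (φ s z) := by
      rw [← hφ.2.2]; congr 1; ring
    rw [h1, h2]
    exact hmod _ _ (htr s ⟨hs, by linarith⟩) u₀ ⟨hu₀.1, hu₀.2.trans huU⟩
  have hub2 : dist (φ (s + u₀) z) (φ (α (s + u₀)) x) ≤ δ₁ / 3 := by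
    rw [dist_comm]
    exact (htr (s + u₀) hu₀m).trans hε
  have := dist_triangle (φ (α s + u₀) x) (φ (s + u₀) z) (φ (α (s + u₀)) x)
  linarith

/-- Chained lower bound on a tracking reparametrization. -/
theorem drift_chain (hφ : IsFlow φ)
    {τ δ₁ U ε m : ℝ} {x z : X} {α : ℝ → ℝ}
    (hτ : 0 < τ) (hδ₁ : 0 < δ₁) (hU : 0 < U)
    (hsep : ∀ (w : X) (a : ℝ), τ ≤ |a| → |a| ≤ 2 * τ → δ₁ ≤ dist (φ a w) w)
    (hmod : ∀ p q : X, dist p q ≤ ε → ∀ u ∈ Set.Icc 0 U, dist (φ u p) (φ u q) ≤ δ₁ / 3)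
    (hε : ε ≤ δ₁ / 3)
    (hαc : ContinuousOn α (Set.Icc 0 m)) (hα0 : α 0 = 0)
    (htr : ∀ s ∈ Set.Icc 0 m, dist (φ (α s) x) (φ s z) ≤ ε) :
    ∀ (k : ℕ) (σ : ℝ), 0 ≤ σ → σ ≤ m → σ ≤ k * U → σ - (k + 1) * τ ≤ α σ := by
  intro k
  induction k with
  | zero =>
      intro σ h0 hσm hσk
      simp only [Nat.cast_zero, zero_mul] at hσk
      have : σ = 0 := le_antisymm hσk h0
      rw [this, hα0]
      simp only [Nat.cast_zero]
      nlinarith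
  | succ k ih =>
      intro σ h0 hσm hσk
      by_cases hk : σ ≤ k * U
      · have := ih σ h0 hσm hk
        have hk1 : ((k : ℝ) + 1) * τ ≤ ((k : ℝ) + 1 + 1) * τ := by nlinarith
        push_cast
        push_cast at this
        linarith
      · push_neg at hk
        by_cases hσU : σ ≤ U
        · have hd := drift_lemma hφ hτ hδ₁ hsep hmod hε hαc htr
            (le_refl (0:ℝ)) h0 hσU (by simpa using hσm)
          rw [zero_add, hα0, sub_zero] at hd
          have := abs_lt.1 hd
          push_cast
          nlinarith [this.1]
        · push_neg at hσU
          set s := σ - U with hs_def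
          have hs0 : 0 ≤ s := by rw [hs_def]; linarith
          have hsm : s ≤ m := by rw [hs_def]; linarith
          have hsk : s ≤ k * U := by
            rw [hs_def]
            push_cast at hσk
            linarith
          have hih := ih s hs0 hsm hsk
          have hd := drift_lemma hφ hτ hδ₁ hsep hmod hε hαc htr
            hs0 (le_of_lt hU) (le_refl U) (by rw [hs_def]; linarith)
          have hσeq : s + U = σ := by rw [hs_def]; ring
          rw [hσeq] at hd
          have := abs_lt.1 hd
          push_cast
          push_cast at hih
          nlinarith [this.1]

/-- Quantitative lower bound `α σ ≥ σ - (σ/U + 2) τ`. -/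
theorem drift_lower (hφ : IsFlow φ)
    {τ δ₁ U ε m : ℝ} {x z : X} {α : ℝ → ℝ}
    (hτ : 0 < τ) (hδ₁ : 0 < δ₁) (hU : 0 < U)
    (hsep : ∀ (w : X) (a : ℝ), τ ≤ |a| → |a| ≤ 2 * τ → δ₁ ≤ dist (φ a w) w)
    (hmod : ∀ p q : X, dist p q ≤ ε → ∀ u ∈ Set.Icc 0 U, dist (φ u p) (φ u q) ≤ δ₁ / 3)
    (hε : ε ≤ δ₁ / 3)
    (hαc : ContinuousOn α (Set.Icc 0 m)) (hα0 : α 0 = 0)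
    (htr : ∀ s ∈ Set.Icc 0 m, dist (φ (α s) x) (φ s z) ≤ ε)
    {σ : ℝ} (h0 : 0 ≤ σ) (hσm : σ ≤ m) :
    σ - (σ / U + 2) * τ ≤ α σ := by
  set k : ℕ := ⌈σ / U⌉₊ with hk_def
  have h1 : σ ≤ k * U := by
    have := Nat.le_ceil (σ / U)
    calc σ = σ / U * U := by field_simp
    _ ≤ k * U := by
        apply mul_le_mul_of_nonneg_right _ hU.le
        exact this
  have h2 : (k : ℝ) < σ / U + 1 := Nat.ceil_lt_add_one (by positivity)
  have h3 := drift_chain hφ hτ hδ₁ hU hsep hmod hε hαc hα0 htr k σ h0 hσm h1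
  nlinarith

/-- Metric balls are contained in reparametrization balls (with trivial reparametrization). -/
theorem dist_mem_repBallCl (φ : ℝ → X → X) {T ε δ : ℝ} {x y : X}
    (hmod : ∀ p q : X, dist p q ≤ δ → ∀ u ∈ Set.Icc 0 T, dist (φ u p) (φ u q) ≤ ε)
    (h : dist x y ≤ δ) : y ∈ repBallCl φ x T ε :=
  ⟨fun s => s, isRep_id T, fun s hs => hmod x y h s hs⟩

end Dev3
section Dev4

variable [MetricSpace X] [CompactSpace X] {φ : ℝ → X → X}

/-- The covering lemma: if the closed reparametrization balls of `x` (time `n`) and `x'`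
(time `m ≤ n`) intersect, then `x` lies in an enlarged ball of `x'` of time `A`. -/
theorem covering_lemma (hφ : IsFlow φ)
    {τ δ₁ U ε m n A : ℝ} {x x' z : X}
    (hτ : 0 < τ) (hδ₁ : 0 < δ₁) (hU : 0 < U) (hτU : 2 * τ ≤ U)
    (hsep : ∀ (w : X) (a : ℝ), τ ≤ |a| → |a| ≤ 2 * τ → δ₁ ≤ dist (φ a w) w)
    (hmod : ∀ p q : X, dist p q ≤ ε → ∀ u ∈ Set.Icc 0 U, dist (φ u p) (φ u q) ≤ δ₁ / 3)
    (hε : ε ≤ δ₁ / 3)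
    (hm : 0 ≤ m) (hmn : m ≤ n)
    (hA0 : 0 < A) (hAm : A ≤ m - (m / U + 2) * τ)
    (hzx : z ∈ repBallCl φ x n ε) (hzx' : z ∈ repBallCl φ x' m ε) :
    x ∈ repBallCl φ x' A (2 * ε) := by
  classical
  obtain ⟨α, ⟨hαc, hαi, hα0⟩, hαtr⟩ := hzx
  obtain ⟨β, ⟨hβc, hβi, hβ0⟩, hβtr⟩ := hzx'
  -- monotone comparison of the lower-bound function
  have hmono_fn : ∀ σ1 σ2 : ℝ, 0 ≤ σ1 → σ1 ≤ σ2 →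
      σ1 - (σ1 / U + 2) * τ ≤ σ2 - (σ2 / U + 2) * τ := by
    intro σ1 σ2 h1 h12
    have hd : 0 ≤ σ2 - σ1 := by linarith
    have h3 : (σ2 - σ1) / U * τ ≤ (σ2 - σ1) / U * U :=
      mul_le_mul_of_nonneg_left (by linarith) (by positivity)
    rw [div_mul_cancel₀ _ hU.ne'] at h3
    have h4 : σ2 / U - σ1 / U = (σ2 - σ1) / U := by ring
    nlinarith [h3, h4]
  have hn0 : 0 < n := by
    by_contra hn
    push_neg at hn
    have hmeq : m = 0 := le_antisymm (hmn.trans hn) hm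
    rw [hmeq] at hAm
    simp at hAm
    nlinarith
  have hlow : ∀ σ ∈ Set.Icc (0:ℝ) n, σ - (σ / U + 2) * τ ≤ α σ := fun σ hσ =>
    drift_lower hφ hτ hδ₁ hU hsep hmod hε hαc hα0 hαtr hσ.1 hσ.2
  have hαn_pos : 0 < α n := by
    have := hlow n ⟨hn0.le, le_refl n⟩
    have h2 := hmono_fn m n hm hmn
    linarith
  -- α is strictly monotone increasing
  have hmono : StrictMonoOn α (Set.Icc 0 n) := by
    rcases ContinuousOn.strictMonoOn_of_injOn_Icc' hn0.le hαc hαi with h | h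
    · exact h
    · exfalso
      have := h (Set.left_mem_Icc.2 hn0.le) (Set.right_mem_Icc.2 hn0.le) hn0
      rw [hα0] at this
      linarith
  have hAαm : A ≤ α m := hAm.trans (hlow m ⟨hm, hmn⟩)
  -- the inverse of α on [0, m]
  set K : Set ℝ := Set.Icc 0 m with hK_def
  have hKsub : K ⊆ Set.Icc 0 n := Set.Icc_subset_Icc_right hmn
  have hαcK : ContinuousOn α K := hαc.mono hKsub
  have hαiK : Set.InjOn α K := hαi.mono hKsub
  have himg : Set.Icc 0 A ⊆ α '' K := by
    have h1 : Set.Icc (α 0) (α m) ⊆ α '' K := intermediate_value_Icc hm hαcK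
    intro u hu
    exact h1 ⟨by rw [hα0]; exact hu.1, hu.2.trans hAαm⟩
  have hKcpt : IsCompact K := isCompact_Icc
  have : CompactSpace ↥K := isCompact_iff_compactSpace.mp hKcpt
  set F : ↥K → ↥(α '' K) := fun σ => ⟨α ↑σ, Set.mem_image_of_mem α σ.2⟩ with hF_def
  have hFc : Continuous F := Continuous.subtype_mk hαcK.restrict _
  have hFbij : Function.Bijective F := by
    constructor
    · intro σ σ' h
      exact Subtype.ext (hαiK σ.2 σ'.2 (congrArg Subtype.val h))
    · rintro ⟨u, hu⟩
      obtain ⟨σ, hσ, rfl⟩ := hu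
      exact ⟨⟨σ, hσ⟩, rfl⟩
  set e : ↥K ≃ ↥(α '' K) := Equiv.ofBijective F hFbij with he_def
  have hec : Continuous ⇑e := hFc
  set homeo := hec.homeoOfEquivCompactToT2 with hhomeo_def
  set inv : ℝ → ℝ := fun u => if h : u ∈ α '' K then ((homeo.symm ⟨u, h⟩ : ↥K) : ℝ) else 0
    with hinv_def
  have hinvmem : ∀ u, ∀ h : u ∈ α '' K, inv u ∈ K ∧ α (inv u) = u := by
    intro u h
    rw [hinv_def]
    simp only [dif_pos h]
    refine ⟨(homeo.symm ⟨u, h⟩).2, ?_⟩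
    have h1 : homeo (homeo.symm ⟨u, h⟩) = ⟨u, h⟩ := homeo.apply_symm_apply _
    have h2 : (homeo (homeo.symm ⟨u, h⟩) : ℝ) = u := by rw [h1]
    exact h2
  have hinvc : ContinuousOn inv (α '' K) := by
    rw [continuousOn_iff_continuous_restrict]
    have : Set.restrict (α '' K) inv = fun y : ↥(α '' K) => ((homeo.symm y : ↥K) : ℝ) := by
      funext y
      simp only [Set.restrict_apply, hinv_def, dif_pos y.2, Subtype.coe_eta]; exact dif_pos y.2
    show Continuous ((α '' K).restrict inv); rw [this]
    exact continuous_subtype_val.comp homeo.symm.continuous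
  -- build the composite reparametrization
  refine ⟨fun u => β (inv u), ⟨?_, ?_, ?_⟩, ?_⟩
  · -- continuity
    exact hβc.comp (hinvc.mono himg) (fun u hu => (hinvmem u (himg hu)).1)
  · -- injectivity
    intro u hu u' hu' h
    have h1 := hβi ((hinvmem u (himg hu)).1) ((hinvmem u' (himg hu')).1) h
    have h2 := (hinvmem u (himg hu)).2
    have h3 := (hinvmem u' (himg hu')).2
    rw [← h2, ← h3, h1]
  · -- value at zero
    have h0A : (0:ℝ) ∈ Set.Icc (0:ℝ) A := Set.left_mem_Icc.2 hA0.le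
    have h2 := (hinvmem 0 (himg h0A)).2
    have h1 := (hinvmem 0 (himg h0A)).1
    have h0K : (0:ℝ) ∈ K := Set.left_mem_Icc.2 hm
    have : inv 0 = 0 := by
      apply hαiK h1 h0K
      rw [h2, hα0]
    show β (inv 0) = 0
    rw [this, hβ0]
  · -- tracking
    intro u hu
    have hσK := (hinvmem u (himg hu)).1
    have hσα := (hinvmem u (himg hu)).2
    calc dist (φ (β (inv u)) x') (φ u x)
        ≤ dist (φ (β (inv u)) x') (φ (inv u) z) + dist (φ (inv u) z) (φ u x) :=
          dist_triangle _ _ _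
    _ ≤ ε + ε := by
        refine add_le_add (hβtr (inv u) hσK) ?_
        have h := hαtr (inv u) (hKsub hσK)
        rw [hσα, dist_comm] at h
        exact h
    _ = 2 * ε := by ring

end Dev4
section Dev5

variable {Y : Type*}

/-- Abstract multi-scale greedy packing construction. -/
theorem greedy_packing (Bp Bc : Y → Set Y) (k : Y → ℕ) (F : Set Y) (K₀ : ℕ)
    (hstage : ∀ x ∈ F, K₀ ≤ k x)
    (hself : ∀ x ∈ F, x ∈ Bp x)
    (hcollide : ∀ x ∈ F, ∀ y ∈ F, k y ≤ k x → (Bp x ∩ Bp y).Nonempty → x ∈ Bc y)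
    (hcount : ∀ (j : ℕ) (S : Set Y), S ⊆ F → (∀ x ∈ S, k x = j) →
      S.Pairwise (fun a b => Disjoint (Bp a) (Bp b)) → S.Countable) :
    ∃ 𝒞 : Set Y, 𝒞 ⊆ F ∧ 𝒞.Countable ∧
      𝒞.Pairwise (fun a b => Disjoint (Bp a) (Bp b)) ∧ F ⊆ ⋃ x ∈ 𝒞, Bc x := by
  classical
  set D : Y → Y → Prop := fun a b => Disjoint (Bp a) (Bp b) with hD_def
  set G : ℕ → Set Y := fun j => {x ∈ F | k x = K₀ + j} with hG_def
  set A : Set Y → ℕ → Set (Set Y) :=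
    fun P j => {S | S ⊆ G j ∧ (P ∪ S).Pairwise D} with hA_def
  -- Zorn at each stage
  have hzorn : ∀ (P : Set Y) (j : ℕ), P.Pairwise D → ∃ S, Maximal (· ∈ A P j) S := by
    intro P j hP
    apply zorn_subset
    intro c hc hchain
    rcases c.eq_empty_or_nonempty with rfl | ⟨S₀, hS₀⟩
    · refine ⟨∅, ⟨Set.empty_subset _, ?_⟩, fun s hs => absurd hs (Set.notMem_empty s)⟩
      rw [Set.union_empty]
      exact hP
    · refine ⟨⋃₀ c, ⟨?_, ?_⟩, fun s hs => Set.subset_sUnion_of_mem hs⟩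
      · intro x hx
        obtain ⟨S, hSc, hxS⟩ := hx
        exact (hc hSc).1 hxS
      · intro a ha b hb hab
        rcases ha with ha | ha
        · rcases hb with hb | hb
          · exact (hc hS₀).2 (Or.inl ha) (Or.inl hb) hab
          · obtain ⟨S, hSc, hbS⟩ := hb
            exact (hc hSc).2 (Or.inl ha) (Or.inr hbS) hab
        · obtain ⟨S, hSc, haS⟩ := ha
          rcases hb with hb | hb
          · exact (hc hSc).2 (Or.inr haS) (Or.inl hb) hab
          · obtain ⟨S', hS'c, hbS'⟩ := hb
            rcases hchain.total hSc hS'c with hss | hss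
            · exact (hc hS'c).2 (Or.inr (hss haS)) (Or.inr hbS') hab
            · exact (hc hSc).2 (Or.inr haS) (Or.inr (hss hbS')) hab
  set step : ℕ → Set Y → Set Y :=
    fun j P => if h : ∃ S, Maximal (· ∈ A P j) S then h.choose else ∅ with hstep_def
  have hstep_max : ∀ (P : Set Y) (j : ℕ), P.Pairwise D →
      Maximal (· ∈ A P j) (step j P) := by
    intro P j hP
    have hex := hzorn P j hP
    rw [hstep_def]
    simp only [dif_pos hex]
    exact hex.choose_spec
  set E : ℕ → Set Y := fun j => Nat.rec ∅ (fun j P => P ∪ step j P) j with hE_def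
  have hE_succ : ∀ j, E (j + 1) = E j ∪ step j (E j) := fun j => rfl
  -- invariants
  have hinv : ∀ j, E j ⊆ F ∧ (E j).Pairwise D ∧ (∀ x ∈ E j, k x < K₀ + j) ∧ (E j).Countable := by
    intro j
    induction j with
    | zero => exact ⟨Set.empty_subset _, Set.pairwise_empty _,
        fun x hx => absurd hx (Set.notMem_empty x), Set.countable_empty⟩
    | succ j ih =>
        obtain ⟨hF, hPD, hstg, hcnt⟩ := ih
        have hmax := hstep_max (E j) j hPD
        have hSG : step j (E j) ⊆ G j := hmax.1.1
        have hSPD : (E j ∪ step j (E j)).Pairwise D := hmax.1.2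
        refine ⟨?_, by rw [hE_succ]; exact hSPD, ?_, ?_⟩
        · rw [hE_succ]
          exact Set.union_subset hF (fun x hx => (hSG hx).1)
        · rw [hE_succ]
          rintro x (hx | hx)
          · exact (hstg x hx).trans (by omega)
          · rw [(hSG hx).2]
            omega
        · rw [hE_succ]
          refine hcnt.union ?_
          apply hcount (K₀ + j) (step j (E j)) (fun x hx => (hSG hx).1)
            (fun x hx => (hSG hx).2)
          exact hSPD.mono Set.subset_union_right
  -- stage maximality
  have hmaxprop : ∀ j, ∀ y ∈ G j, ∃ x ∈ E (j + 1), k x ≤ K₀ + j ∧ (Bp x ∩ Bp y).Nonempty := by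
    intro j y hy
    obtain ⟨hF, hPD, hstg, -⟩ := hinv j
    have hmax := hstep_max (E j) j hPD
    set S := step j (E j) with hS_def
    by_cases hyS : y ∈ S
    · refine ⟨y, Or.inr hyS, le_of_eq (hmax.1.1 hyS).2, ⟨y, hself y hy.1, hself y hy.1⟩⟩
    · by_cases hcoll : ∃ x ∈ E j ∪ S, x ≠ y ∧ ¬ D x y
      · obtain ⟨x, hx, hxy, hnd⟩ := hcoll
        refine ⟨x, hx, ?_, Set.not_disjoint_iff_nonempty_inter.1 hnd⟩
        rcases hx with hx | hx
        · exact (hstg x hx).le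
        · exact le_of_eq (hmax.1.1 hx).2
      · exfalso
        push_neg at hcoll
        have hSy : S ∪ {y} ∈ A (E j) j := by
          constructor
          · exact Set.union_subset hmax.1.1 (by simpa using hy)
          · intro a ha b hb hab
            have hsplit : ∀ c, c ∈ E j ∪ (S ∪ {y}) → c ∈ (E j ∪ S) ∪ {y} := by
              intro c hc
              rcases hc with hc | hc
              · exact Or.inl (Or.inl hc)
              · rcases hc with hc | hc
                · exact Or.inl (Or.inr hc)
                · exact Or.inr hc
            rcases hsplit a ha with ha' | ha'
            · rcases hsplit b hb with hb' | hb'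
              · exact hmax.1.2 (by rcases ha' with h|h; exact Or.inl h; exact Or.inr h)
                  (by rcases hb' with h|h; exact Or.inl h; exact Or.inr h) hab
              · have hby : b = y := hb'
                subst hby
                exact hcoll a ha' hab
            · have hay : a = y := ha'
              subst hay
              rcases hsplit b hb with hb' | hb'
              · exact ((hcoll b hb' (Ne.symm hab)).symm : D _ _)
              · exact absurd hb' (by intro h; exact hab (h.symm))
        have := hmax.2 hSy Set.subset_union_left
        exact hyS (this (Set.mem_union_right _ rfl))
  -- assemble
  have hEmono : Monotone E := by
    apply monotone_nat_of_le_succ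
    intro j
    rw [hE_succ]
    exact Set.subset_union_left
  refine ⟨⋃ j, E j, ?_, ?_, ?_, ?_⟩
  · exact Set.iUnion_subset (fun j => (hinv j).1)
  · exact Set.countable_iUnion (fun j => (hinv j).2.2.2)
  · intro a ha b hb hab
    obtain ⟨j1, hj1⟩ := Set.mem_iUnion.1 ha
    obtain ⟨j2, hj2⟩ := Set.mem_iUnion.1 hb
    exact (hinv (max j1 j2)).2.1 (hEmono (le_max_left j1 j2) hj1)
      (hEmono (le_max_right j1 j2) hj2) hab
  · intro y hy
    set j := k y - K₀ with hj_def
    have hyG : y ∈ G j := by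
      refine ⟨hy, ?_⟩
      have := hstage y hy
      omega
    obtain ⟨x, hxE, hkx, hinter⟩ := hmaxprop j y hyG
    have hkxy : k x ≤ k y := by
      have := hstage y hy
      omega
    have hyBc : y ∈ Bc x := by
      apply hcollide y hy x ((hinv (j+1)).1 hxE) hkxy
      rw [Set.inter_comm]
      exact hinter
    exact Set.mem_biUnion (Set.mem_iUnion.2 ⟨j + 1, hxE⟩) hyBc

end Dev5
section Dev6

variable [MetricSpace X] {φ : ℝ → X → X}

theorem erealToENNReal_mono {a b : EReal} (h : a ≤ b) :
    erealToENNReal a ≤ erealToENNReal b := by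
  unfold erealToENNReal
  by_cases hb : b = ⊤
  · simp [hb]
  · have ha : a ≠ ⊤ := fun h' => hb (top_le_iff.1 (h' ▸ h))
    rw [if_neg ha, if_neg hb]
    by_cases habot : a = ⊥
    · rw [habot]
      simpa using zero_le _
    · exact ENNReal.ofReal_le_ofReal (EReal.toReal_le_toReal h habot hb)

theorem upLocalEntAt_anti [MeasurableSpace X] (μ : MeasureTheory.Measure X) (x : X)
    {ε₂ ε : ℝ} (h : ε₂ ≤ ε) :
    upLocalEntAt φ μ x ε ≤ upLocalEntAt φ μ x ε₂ := by
  unfold upLocalEntAt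
  apply erealToENNReal_mono
  refine Filter.limsup_le_limsup ?_ Filter.isCobounded_le_of_bot Filter.isBounded_le_of_top
  filter_upwards [Filter.eventually_ge_atTop (0:ℝ)] with t ht
  have hsub : repBall φ x t ε₂ ⊆ repBall φ x t ε := repBall_mono_radius φ x h
  have hμ : μ (repBall φ x t ε₂) ≤ μ (repBall φ x t ε) := MeasureTheory.measure_mono hsub
  have hlog : ENNReal.log (μ (repBall φ x t ε₂)) ≤ ENNReal.log (μ (repBall φ x t ε)) :=
    ENNReal.log_monotone hμ
  have hneg : -(ENNReal.log (μ (repBall φ x t ε))) ≤ -(ENNReal.log (μ (repBall φ x t ε₂))) :=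
    EReal.neg_le_neg_iff.2 hlog
  apply mul_le_mul_of_nonneg_left hneg
  exact_mod_cast inv_nonneg.2 ht

theorem exists_good_time [MeasurableSpace X] (μ : MeasureTheory.Measure X)
    [MeasureTheory.IsProbabilityMeasure μ] {x : X} {ε' s : ℝ} (hs : 0 ≤ s)
    (hx : ENNReal.ofReal s < upLocalEntAt φ μ x ε') (M : ℝ) :
    ∃ t : ℝ, M ≤ t ∧ 1 ≤ t ∧
      μ (repBall φ x t ε') < ENNReal.ofReal (Real.exp (-(s * t))) := by
  set f : ℝ → EReal :=
    fun t => ((t⁻¹ : ℝ) : EReal) * (-(ENNReal.log (μ (repBall φ x t ε')))) with hf_def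
  set L : EReal := Filter.limsup f Filter.atTop with hL_def
  have hsL : (s : EReal) < L := by
    unfold upLocalEntAt erealToENNReal at hx
    by_cases hL : L = ⊤
    · rw [hL]; exact EReal.coe_lt_top s
    · rw [← hL_def, if_neg hL] at hx
      have hslt : s < L.toReal := by
        rcases lt_or_ge s L.toReal with h | h
        · exact h
        · exact absurd hx (not_lt.2 (ENNReal.ofReal_le_ofReal h))
      have hLbot : L ≠ ⊥ := by
        intro hb
        rw [hb] at hslt
        simp at hslt
        linarith
      calc (s : EReal) < (L.toReal : EReal) := by exact_mod_cast hslt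
      _ = L := EReal.coe_toReal hL hLbot
  have hfreq : ∃ᶠ t in Filter.atTop, (s : EReal) < f t := by
    by_contra hcon
    rw [Filter.not_frequently] at hcon
    have : ∀ᶠ t in Filter.atTop, f t ≤ (s : EReal) := hcon.mono (fun t ht => not_lt.1 ht)
    exact absurd (Filter.limsup_le_of_le (h := this)) (not_le.2 hsL)
  obtain ⟨t, hst, hMt⟩ := (hfreq.and_eventually (Filter.eventually_ge_atTop (max M 1))).exists
  refine ⟨t, (le_max_left M 1).trans hMt, (le_max_right M 1).trans hMt, ?_⟩
  by_contra hge
  push_neg at hge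
  set v : ENNReal := μ (repBall φ x t ε') with hv_def
  have ht1 : (1:ℝ) ≤ t := (le_max_right M 1).trans hMt
  have ht0 : (0:ℝ) < t := lt_of_lt_of_le one_pos ht1
  have hv0 : v ≠ 0 := by
    intro h0
    rw [h0] at hge
    exact absurd hge (not_le.2 (ENNReal.ofReal_pos.2 (Real.exp_pos _)))
  have hv1 : v ≠ ⊤ := by
    have : v ≤ 1 := MeasureTheory.prob_le_one
    exact ne_top_of_le_ne_top ENNReal.one_ne_top this
  have hlogv : ENNReal.log v = ((Real.log v.toReal : ℝ) : EReal) :=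
    ENNReal.log_pos_real hv0 hv1
  have hlog_ge : ((-(s * t) : ℝ) : EReal) ≤ ENNReal.log v := by
    calc ((-(s * t) : ℝ) : EReal) = ENNReal.log (ENNReal.ofReal (Real.exp (-(s * t)))) := by
          rw [ENNReal.log_ofReal_of_pos (Real.exp_pos _), Real.log_exp]
    _ ≤ ENNReal.log v := ENNReal.log_monotone hge
  have hlog_ge' : -(s * t) ≤ Real.log v.toReal := by
    rw [hlogv] at hlog_ge
    exact_mod_cast hlog_ge
  have hft : f t ≤ (s : EReal) := by
    rw [hf_def]
    simp only []
    rw [← hv_def, hlogv]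
    have h1 : -(((Real.log v.toReal : ℝ)) : EReal) = ((-Real.log v.toReal : ℝ) : EReal) := by
      exact_mod_cast (EReal.coe_neg _).symm
    rw [h1, ← EReal.coe_mul]
    apply EReal.coe_le_coe_iff.2
    have h2 : -Real.log v.toReal ≤ s * t := by linarith
    calc t⁻¹ * -Real.log v.toReal ≤ t⁻¹ * (s * t) :=
          mul_le_mul_of_nonneg_left h2 (by positivity)
    _ = s := by field_simp
  exact absurd hst (not_lt.2 hft)

end Dev6
section Dev7

variable [MetricSpace X] {φ : ℝ → X → X}

theorem packPre_anti (φ : ℝ → X → X) (Z : Set X) {σ' σ : ℝ} (h : σ' ≤ σ) (ε : ℝ) (N : ℕ) :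
    packPre φ Z σ ε N ≤ packPre φ Z σ' ε N := by
  unfold packPre
  refine iSup_mono fun xf => iSup_mono fun tf => iSup_mono fun I => ?_
  refine iSup_le fun hfam => le_iSup_of_le hfam ?_
  refine ENNReal.tsum_le_tsum fun i => ?_
  apply ENNReal.ofReal_le_ofReal
  apply Real.exp_le_exp.2
  have hti : (0:ℝ) ≤ tf i := by
    have h1 := (hfam.1 i i.2).2
    have h2 : (0:ℝ) ≤ (N : ℝ) := Nat.cast_nonneg N
    linarith
  nlinarith

theorem packM_anti (φ : ℝ → X → X) (Z : Set X) {σ' σ : ℝ} (h : σ' ≤ σ) (ε : ℝ) :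
    packM φ Z σ ε ≤ packM φ Z σ' ε := by
  unfold packM
  refine iInf_mono fun Zs => iInf_mono fun hcov => ?_
  refine ENNReal.tsum_le_tsum fun i => ?_
  exact iInf_mono fun N => packPre_anti φ (Zs i) h ε N

theorem packEnt_ge_of_ne_zero (φ : ℝ → X → X) (Z : Set X) {σ ε : ℝ}
    (h : packM φ Z σ ε ≠ 0) :
    ENNReal.ofReal σ ≤ packEnt φ Z ε := by
  apply le_sInf
  rintro b ⟨u, ⟨hu0, hupack⟩, rfl⟩
  apply ENNReal.ofReal_le_ofReal
  by_contra hlt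
  push_neg at hlt
  exact h (le_antisymm (hupack ▸ packM_anti φ Z hlt.le ε) zero_le)

theorem packEnt_le_packEntTop (φ : ℝ → X → X) (Z : Set X) {ε : ℝ} (hε : 0 < ε) :
    packEnt φ Z ε ≤ packEntTop φ Z :=
  le_iSup_of_le ε (le_iSup_of_le hε le_rfl)

end Dev7
section Dev8

open MeasureTheory

variable [MetricSpace X] [CompactSpace X] {φ : ℝ → X → X}

theorem crux [MeasurableSpace X] [BorelSpace X]
    (hφ : IsFlow φ) (hfpf : FixedPointFree φ) (Z : Set X)
    (μ : Measure X) [IsProbabilityMeasure μ]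
    {s ε' θ : ℝ} (hs : 0 ≤ s) (hε' : 0 < ε') (hθ0 : 0 < θ) (hθ1 : θ ≤ 1/2)
    (hμP : μ ({x | ENNReal.ofReal s < upLocalEntAt φ μ x ε'} ∩ Z) ≠ 0) :
    ∃ ε > 0, packM φ Z ((1 - θ) * s) ε ≠ 0 := by
  classical
  set P : Set X := {x | ENNReal.ofReal s < upLocalEntAt φ μ x ε'} ∩ Z with hP_def
  have hXne : Nonempty X := by
    obtain ⟨x₀, -⟩ := nonempty_of_measure_ne_zero hμP
    exact ⟨x₀⟩
  -- constants
  obtain ⟨τ, hτ, δ₁, hδ₁, hsep⟩ := hφ.period_sep hfpf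
  set U : ℝ := τ / θ with hU_def
  have hU : 0 < U := by positivity
  have hτU : 2 * τ ≤ U := by
    rw [hU_def, le_div_iff₀ hθ0]
    nlinarith
  obtain ⟨δmod, hδmod, hmodU⟩ := hφ.mod_track hU.le (by positivity : (0:ℝ) < δ₁ / 3)
  set ε : ℝ := min δmod (min (δ₁ / 3) (ε' / 3)) with hε_def
  have hεpos : 0 < ε := lt_min hδmod (lt_min (by positivity) (by positivity))
  have hεδ : ε ≤ δmod := min_le_left _ _
  have hε3 : ε ≤ δ₁ / 3 := (min_le_right _ _).trans (min_le_left _ _)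
  have hεε' : 3 * ε ≤ ε' := by
    have := (min_le_right δmod _).trans (min_le_right (δ₁/3) (ε'/3))
    linarith
  have hmod : ∀ p q : X, dist p q ≤ ε → ∀ u ∈ Set.Icc 0 U, dist (φ u p) (φ u q) ≤ δ₁ / 3 :=
    fun p q hpq => hmodU p q (hpq.trans hεδ)
  set σ : ℝ := (1 - θ) * s with hσ_def
  have hθ1' : (0:ℝ) < 1 - θ := by linarith
  have hσ0 : 0 ≤ σ := by positivity
  refine ⟨ε, hεpos, fun hpackM => ?_⟩
  -- the constant c₁
  set c₁ : ℝ := Real.exp (-(s * (2 * τ + 1))) with hc₁_def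
  have hc₁ : 0 < c₁ := Real.exp_pos _
  have hc₁E : ENNReal.ofReal c₁ ≠ 0 := (ENNReal.ofReal_pos.2 hc₁).ne'
  have hc₁E' : ENNReal.ofReal c₁ ≠ ⊤ := ENNReal.ofReal_ne_top
  have hhalf_ne : ENNReal.ofReal c₁ / 2 ≠ 0 := by
    simp only [ne_eq, ENNReal.div_eq_zero_iff]
    push_neg
    exact ⟨hc₁E, ENNReal.ofNat_ne_top⟩
  set η : ENNReal := (ENNReal.ofReal c₁ / 2) * μ P with hη_def
  have hη0 : 0 < η := by
    rw [hη_def]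
    exact ENNReal.mul_pos hhalf_ne hμP
  -- extract a cover
  have hpack_lt : packM φ Z σ ε < η := by rw [hpackM]; exact hη0
  unfold packM at hpack_lt
  obtain ⟨Zs, hZs⟩ := iInf_lt_iff.1 hpack_lt
  obtain ⟨hcov, hsum⟩ := iInf_lt_iff.1 hZs
  -- select a good index
  have hPsub : P ⊆ ⋃ i, (P ∩ Zs i) := by
    intro x hx
    obtain ⟨i, hi⟩ := Set.mem_iUnion.1 (hcov hx.2)
    exact Set.mem_iUnion.2 ⟨i, hx, hi⟩
  have hc₀le : μ P ≤ ∑' i, μ (P ∩ Zs i) :=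
    (measure_mono hPsub).trans (measure_iUnion_le _)
  have hidx : ∃ i, packP φ (Zs i) σ ε < (ENNReal.ofReal c₁ / 2) * μ (P ∩ Zs i) := by
    by_contra hall
    push_neg at hall
    have h1 : η ≤ ∑' i, (ENNReal.ofReal c₁ / 2) * μ (P ∩ Zs i) := by
      rw [ENNReal.tsum_mul_left, hη_def]
      exact mul_le_mul_right hc₀le _
    have h2 : (∑' i, (ENNReal.ofReal c₁ / 2) * μ (P ∩ Zs i)) ≤ ∑' i, packP φ (Zs i) σ ε :=
      ENNReal.tsum_le_tsum (fun i => hall i)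
    exact absurd hsum (not_lt.2 (h1.trans h2))
  obtain ⟨iW, hiW⟩ := hidx
  set W : Set X := Zs iW with hW_def
  set F : Set X := P ∩ W with hF_def
  have hμF : μ F ≠ 0 := by
    intro h0
    rw [h0, mul_zero] at hiW
    exact absurd hiW (not_lt.2 zero_le)
  have hμFtop : μ F ≠ ⊤ :=
    ne_top_of_le_ne_top ENNReal.one_ne_top
      ((measure_mono Set.inter_subset_left).trans prob_le_one)
  obtain ⟨N, hpackPre⟩ := iInf_lt_iff.1 hiW
  set K₀ : ℕ := max N 1 with hK₀_def
  -- time selection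
  have hsel : ∀ x ∈ F, ∃ t : ℝ, (K₀:ℝ) ≤ t ∧ 1 ≤ t ∧
      μ (repBall φ x t ε') < ENNReal.ofReal (Real.exp (-(s * t))) := by
    intro x hx
    exact exists_good_time μ hs hx.1.1 (K₀:ℝ)
  choose! tsel htselK htsel1 htselμ using hsel
  set k : X → ℕ := fun x => ⌈tsel x⌉₊ with hk_def
  have hkK : ∀ x ∈ F, K₀ ≤ k x := by
    intro x hx
    have h1 := htselK x hx
    calc K₀ = ⌈(K₀:ℝ)⌉₊ := (Nat.ceil_natCast K₀).symm
    _ ≤ k x := Nat.ceil_le_ceil h1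
  have htk : ∀ x ∈ F, tsel x ≤ (k x : ℝ) := fun x _ => Nat.le_ceil _
  have hk1 : ∀ x ∈ F, (k x : ℝ) ≤ tsel x + 1 := by
    intro x hx
    have h0 : (0:ℝ) ≤ tsel x := le_trans zero_le_one (htsel1 x hx)
    exact (Nat.ceil_lt_add_one h0).le
  have hktsel0 : ∀ x ∈ F, (1:ℝ) ≤ (k x : ℝ) := fun x hx => (htsel1 x hx).trans (htk x hx)
  -- the time scale
  set mt : ℕ → ℝ := fun j => ((j:ℝ) + 2 * τ) / (1 - θ) with hmt_def
  have hmtA : ∀ j : ℕ, (j:ℝ) = mt j - (mt j / U + 2) * τ := by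
    intro j
    show (j:ℝ) = ((j:ℝ) + 2 * τ) / (1 - θ) - ((((j:ℝ) + 2 * τ) / (1 - θ)) / U + 2) * τ
    rw [hU_def]
    field_simp
    ring
  have hmt_mono : ∀ j j' : ℕ, j ≤ j' → mt j ≤ mt j' := by
    intro j j' h
    show ((j:ℝ) + 2 * τ) / (1 - θ) ≤ ((j':ℝ) + 2 * τ) / (1 - θ)
    rw [div_eq_mul_inv, div_eq_mul_inv]
    apply mul_le_mul_of_nonneg_right _ (inv_nonneg.2 hθ1'.le)
    have hjj : ((j:ℝ)) ≤ (j':ℝ) := by exact_mod_cast h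
    linarith
  have hmt_ge : ∀ j : ℕ, (j:ℝ) ≤ mt j := by
    intro j
    show (j:ℝ) ≤ ((j:ℝ) + 2 * τ) / (1 - θ)
    rw [le_div_iff₀ hθ1']
    have hj : (0:ℝ) ≤ j := Nat.cast_nonneg j
    nlinarith
  have hmt_pos : ∀ j : ℕ, 0 ≤ mt j := fun j => (Nat.cast_nonneg j).trans (hmt_ge j)
  -- the two families of balls
  set Bp : X → Set X := fun x => repBallCl φ x (mt (k x)) ε with hBp_def
  set Bc : X → Set X := fun x => repBallCl φ x ((k x : ℝ)) (2 * ε) with hBc_def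
  -- greedy hypotheses
  have hself : ∀ x ∈ F, x ∈ Bp x := fun x _ => mem_repBallCl_self φ x hεpos.le
  have hcollide : ∀ x ∈ F, ∀ y ∈ F, k y ≤ k x → (Bp x ∩ Bp y).Nonempty → x ∈ Bc y := by
    intro x hx y hy hky hne
    obtain ⟨z, hz1, hz2⟩ := hne
    exact covering_lemma hφ hτ hδ₁ hU hτU hsep hmod hε3 (hmt_pos (k y))
      (hmt_mono _ _ hky) (lt_of_lt_of_le one_pos (hktsel0 y hy))
      (le_of_eq (hmtA (k y))) hz1 hz2
  have hcount : ∀ (j : ℕ) (S : Set X), S ⊆ F → (∀ x ∈ S, k x = j) →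
      S.Pairwise (fun a b => Disjoint (Bp a) (Bp b)) → S.Countable := by
    intro j S hSF hSk hSpd
    obtain ⟨δj, hδj, hmodj⟩ := hφ.mod_track (le_max_right (mt j) 0) hεpos
    have hball : ∀ x ∈ S, ∀ y : X, dist x y ≤ δj → y ∈ Bp x := by
      intro x hx y hy
      have hkx : k x = j := hSk x hx
      apply dist_mem_repBallCl φ (T := mt (k x)) (δ := δj) ?_ hy
      intro p q hpq u hu
      exact hmodj p q hpq u ⟨hu.1, hu.2.trans (by rw [hkx]; exact le_max_left _ _)⟩
    obtain ⟨Dd, hDc, hDd⟩ := TopologicalSpace.exists_countable_dense X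
    have hpick : ∀ x ∈ S, ∃ d, d ∈ Dd ∧ dist x d < δj := by
      intro x hx
      obtain ⟨d, hdD, hdb⟩ := hDd.exists_mem_open Metric.isOpen_ball
        ⟨x, Metric.mem_ball_self hδj⟩
      exact ⟨d, hdD, by rwa [Metric.mem_ball, dist_comm] at hdb⟩
    choose! dsel hdselD hdseld using hpick
    have hinj : Set.InjOn dsel S := by
      intro a ha b hb hab
      by_contra hne
      have hd1 : dsel a ∈ Bp a := hball a ha (dsel a) (hdseld a ha).le
      have hd2 : dsel a ∈ Bp b := by
        rw [hab]
        exact hball b hb (dsel b) (hdseld b hb).le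
      exact (Set.disjoint_left.1 (hSpd ha hb hne)) hd1 hd2
    apply countable_of_injective_of_countable_image hinj
    apply hDc.mono
    rintro _ ⟨x, hx, rfl⟩
    exact hdselD x hx
  obtain ⟨𝒞, h𝒞F, h𝒞c, h𝒞pd, h𝒞cov⟩ := greedy_packing Bp Bc k F K₀ hkK hself hcollide hcount
  -- measure bound for the covering balls
  have hBcμ : ∀ x ∈ 𝒞, μ (Bc x) ≤
      ENNReal.ofReal (Real.exp s * Real.exp (-(s * (k x : ℝ)))) := by
    intro x hx
    have hxF := h𝒞F hx
    have h1 : Bc x ⊆ repBall φ x (tsel x) ε' := by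
      have h2 : Bc x ⊆ repBallCl φ x (tsel x) (2 * ε) :=
        repBallCl_anti_time φ x (le_trans zero_le_one (htsel1 x hxF)) (htk x hxF)
      exact h2.trans (repBallCl_subset_repBall φ x (by linarith : 2 * ε < ε'))
    calc μ (Bc x) ≤ μ (repBall φ x (tsel x) ε') := measure_mono h1
    _ ≤ ENNReal.ofReal (Real.exp (-(s * tsel x))) := (htselμ x hxF).le
    _ ≤ _ := by
        apply ENNReal.ofReal_le_ofReal
        rw [← Real.exp_add]
        apply Real.exp_le_exp.2
        nlinarith [hk1 x hxF]
  -- covering sum bound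
  set T : ENNReal := ∑' (c : ↥𝒞), ENNReal.ofReal (Real.exp (-(s * (k ↑c : ℝ)))) with hT_def
  have hcover : μ F ≤ ENNReal.ofReal (Real.exp s) * T := by
    calc μ F ≤ μ (⋃ x ∈ 𝒞, Bc x) := measure_mono h𝒞cov
    _ ≤ ∑' (c : ↥𝒞), μ (Bc ↑c) := measure_biUnion_le μ h𝒞c Bc
    _ ≤ ∑' (c : ↥𝒞), ENNReal.ofReal (Real.exp s * Real.exp (-(s * (k ↑c : ℝ)))) :=
        ENNReal.tsum_le_tsum (fun c => hBcμ ↑c c.2)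
    _ = _ := by
        simp_rw [ENNReal.ofReal_mul (Real.exp_nonneg s)]
        rw [ENNReal.tsum_mul_left]
  have hT_ge : ENNReal.ofReal (Real.exp (-s)) * μ F ≤ T := by
    calc ENNReal.ofReal (Real.exp (-s)) * μ F
        ≤ ENNReal.ofReal (Real.exp (-s)) * (ENNReal.ofReal (Real.exp s) * T) :=
          mul_le_mul_right hcover _
    _ = T := by
        rw [← mul_assoc, ← ENNReal.ofReal_mul (Real.exp_nonneg _), ← Real.exp_add,
          neg_add_cancel, Real.exp_zero, ENNReal.ofReal_one, one_mul]
  -- build the packing family from 𝒞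
  haveI := h𝒞c.to_subtype
  obtain ⟨f, hfinj⟩ := exists_injective_nat ↥𝒞
  set I : Set ℕ := Set.range f with hI_def
  set xf : ℕ → X := fun i => if h : ∃ c : ↥𝒞, f c = i then ((h.choose : ↥𝒞) : X)
    else Classical.arbitrary X with hxf_def
  set tf : ℕ → ℝ := fun i => mt (k (xf i)) with htf_def
  have hxf : ∀ c : ↥𝒞, xf (f c) = ↑c := by
    intro c
    have hex : ∃ c' : ↥𝒞, f c' = f c := ⟨c, rfl⟩
    rw [hxf_def]
    simp only [dif_pos hex]
    exact congrArg _ (hfinj hex.choose_spec)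
  have hfam : IsPackingFamily φ W ε N I xf tf := by
    constructor
    · rintro i ⟨c, rfl⟩
      rw [htf_def]
      simp only [hxf c]
      refine ⟨(h𝒞F c.2).2, ?_⟩
      have h1 : (N : ℝ) ≤ (K₀ : ℝ) := by
        exact_mod_cast le_max_left N 1
      have h2 : (K₀ : ℝ) ≤ (k ↑c : ℝ) := by
        exact_mod_cast hkK ↑c (h𝒞F c.2)
      exact h1.trans (h2.trans (hmt_ge _))
    · rintro i ⟨c, rfl⟩ j ⟨c', rfl⟩ hij
      have hcc' : c ≠ c' := fun h => hij (by rw [h])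
      have hval : (↑c : X) ≠ ↑c' := Subtype.coe_injective.ne hcc'
      have hdisj := h𝒞pd c.2 c'.2 hval
      rw [htf_def]
      simp only [hxf c, hxf c']
      exact hdisj
  have hlow : (∑' (i : ↥I), ENNReal.ofReal (Real.exp (-(σ * tf ↑i)))) ≤ packPre φ W σ ε N := by
    unfold packPre
    exact le_iSup_of_le xf (le_iSup_of_le tf (le_iSup_of_le I (le_iSup_of_le hfam le_rfl)))
  -- reindex the sum
  set e : ↥𝒞 ≃ ↥I := Equiv.ofInjective f hfinj with he_def
  have hsum_eq : (∑' (i : ↥I), ENNReal.ofReal (Real.exp (-(σ * tf ↑i)))) =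
      ∑' (c : ↥𝒞), ENNReal.ofReal (Real.exp (-(σ * mt (k ↑c)))) := by
    rw [← Equiv.tsum_eq e (fun i : ↥I => ENNReal.ofReal (Real.exp (-(σ * tf ↑i))))]
    congr 1
    funext c
    have h1 : ((e c : ↥I) : ℕ) = f c := rfl
    rw [h1, htf_def]
    simp only [hxf c]
  have hexp : ∀ j : ℕ, Real.exp (-(σ * mt j)) =
      Real.exp (-(s * (2 * τ))) * Real.exp (-(s * (j:ℝ))) := by
    intro j
    rw [← Real.exp_add]
    congr 1
    show -((1 - θ) * s * (((j:ℝ) + 2 * τ) / (1 - θ))) = -(s * (2*τ)) + -(s * (j:ℝ))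
    field_simp
    ring
  have hsum2 : (∑' (c : ↥𝒞), ENNReal.ofReal (Real.exp (-(σ * mt (k ↑c))))) =
      ENNReal.ofReal (Real.exp (-(s * (2 * τ)))) * T := by
    rw [hT_def]
    simp_rw [hexp, ENNReal.ofReal_mul (Real.exp_nonneg _)]
    rw [ENNReal.tsum_mul_left]
  -- the final chain
  have hfinal : ENNReal.ofReal c₁ * μ F ≤ packPre φ W σ ε N := by
    have hc₁eq : c₁ = Real.exp (-(s * (2 * τ))) * Real.exp (-s) := by
      rw [hc₁_def, ← Real.exp_add]
      congr 1
      ring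
    calc ENNReal.ofReal c₁ * μ F
        = ENNReal.ofReal (Real.exp (-(s * (2 * τ)))) * (ENNReal.ofReal (Real.exp (-s)) * μ F) := by
          rw [← mul_assoc, ← ENNReal.ofReal_mul (Real.exp_nonneg _), ← hc₁eq]
    _ ≤ ENNReal.ofReal (Real.exp (-(s * (2 * τ)))) * T := mul_le_mul_right hT_ge _
    _ = ∑' (c : ↥𝒞), ENNReal.ofReal (Real.exp (-(σ * mt (k ↑c)))) := hsum2.symm
    _ = ∑' (i : ↥I), ENNReal.ofReal (Real.exp (-(σ * tf ↑i))) := hsum_eq.symm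
    _ ≤ packPre φ W σ ε N := hlow
  have hstrict : (ENNReal.ofReal c₁ / 2) * μ F < ENNReal.ofReal c₁ * μ F :=
    by rw [mul_comm _ (μ F), mul_comm _ (μ F)]; exact ENNReal.mul_lt_mul_right hμF hμFtop (ENNReal.half_lt_self hc₁E hc₁E')
  exact absurd hfinal (not_le.2 (lt_trans hpackPre hstrict))

end Dev8
/-- lower bound in the variational principle for packing entropy. -/
theorem packing_entropy_lower_bound [MetricSpace X] [CompactSpace X]
    [MeasurableSpace X] [BorelSpace X]
    (φ : ℝ → X → X) (hφ : IsFlow φ) (hfpf : FixedPointFree φ)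
    (Z : Set X) (hZ : MeasurableSet Z) :
    (⨆ (μ : Measure X) (_ : IsProbabilityMeasure μ) (_ : μ Z = 1), upEnt φ μ) ≤
      packEntTop φ Z := by
  classical
  refine iSup_le fun μ => iSup_le fun hprob => iSup_le fun hμZ => ?_
  haveI := hprob
  set R := packEntTop φ Z with hR_def
  by_cases hRtop : R = ⊤
  · rw [hRtop]; exact le_top
  by_contra hcon
  push_neg at hcon
  obtain ⟨t', ht'0, hRt', ht'up⟩ := ENNReal.lt_iff_exists_real_btwn.1 hcon
  -- a set of positive measure where the local entropy exceeds t'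
  have hae : ¬ (∀ᵐ x ∂μ, upLocalEnt φ μ x ≤ ENNReal.ofReal t') := by
    intro hae
    have hle : upEnt φ μ ≤ ENNReal.ofReal t' := by
      unfold upEnt
      calc ∫⁻ x, upLocalEnt φ μ x ∂μ ≤ ∫⁻ _, ENNReal.ofReal t' ∂μ := lintegral_mono_ae hae
      _ = ENNReal.ofReal t' := by rw [MeasureTheory.lintegral_const, measure_univ, mul_one]
    exact absurd (lt_of_lt_of_le ht'up hle) (lt_irrefl _)
  rw [MeasureTheory.ae_iff] at hae
  set Pbig : Set X := {x | ¬ upLocalEnt φ μ x ≤ ENNReal.ofReal t'} with hPbig_def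
  have hZc : μ Zᶜ = 0 := by
    have h1 := measure_compl hZ (MeasureTheory.measure_ne_top μ Z)
    rw [hμZ, measure_univ] at h1
    simpa using h1
  have hPZ : μ (Pbig ∩ Z) ≠ 0 := by
    intro h0
    have h1 : μ (Pbig ∩ Z) + μ (Pbig \ Z) = μ Pbig := measure_inter_add_diff Pbig hZ
    have h2 : μ (Pbig \ Z) ≤ μ Zᶜ := measure_mono (fun x hx => hx.2)
    rw [h0, zero_add] at h1
    exact hae (le_antisymm (h1 ▸ (h2.trans hZc.le)) zero_le)
  -- pass to a rational radius
  set Pq : ℚ → Set X := fun q =>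
    if 0 < (q:ℝ) then {x | ENNReal.ofReal t' < upLocalEntAt φ μ x (q:ℝ)} ∩ Z else ∅
    with hPq_def
  have hsub : Pbig ∩ Z ⊆ ⋃ q : ℚ, Pq q := by
    rintro x ⟨hx1, hx2⟩
    have hx1' : ENNReal.ofReal t' < upLocalEnt φ μ x := not_le.1 hx1
    unfold upLocalEnt at hx1'
    rw [lt_iSup_iff] at hx1'
    obtain ⟨ε, hε⟩ := hx1'
    rw [lt_iSup_iff] at hε
    obtain ⟨hε0, hεlt⟩ := hε
    obtain ⟨q, hq0, hqε⟩ := exists_rat_btwn hε0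
    have hanti := upLocalEntAt_anti (φ := φ) μ x hqε.le
    refine Set.mem_iUnion.2 ⟨q, ?_⟩
    rw [hPq_def]
    simp only [if_pos (by exact_mod_cast hq0 : (0:ℝ) < (q:ℝ))]
    exact ⟨lt_of_lt_of_le hεlt hanti, hx2⟩
  have hq : ∃ q : ℚ, μ (Pq q) ≠ 0 := by
    by_contra hall
    push_neg at hall
    have h1 : μ (Pbig ∩ Z) ≤ ∑' q : ℚ, μ (Pq q) :=
      (measure_mono hsub).trans (measure_iUnion_le _)
    rw [ENNReal.tsum_eq_zero.2 hall] at h1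
    exact hPZ (le_antisymm h1 zero_le)
  obtain ⟨q, hq⟩ := hq
  have hq0 : 0 < (q:ℝ) := by
    by_contra h
    rw [hPq_def] at hq
    simp only [if_neg h] at hq
    exact hq measure_empty
  rw [hPq_def] at hq
  simp only [if_pos hq0] at hq
  -- the key step for each θ
  have hstep : ∀ θ : ℝ, 0 < θ → θ ≤ 1/2 → ENNReal.ofReal ((1 - θ) * t') ≤ R := by
    intro θ h1 h2
    obtain ⟨ε, hε, hne⟩ := crux hφ hfpf Z μ ht'0 hq0 h1 h2 hq
    calc ENNReal.ofReal ((1 - θ) * t') ≤ packEnt φ Z ε := packEnt_ge_of_ne_zero φ Z hne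
    _ ≤ R := packEnt_le_packEntTop φ Z hε
  -- choose θ small enough to contradict R < ofReal t'
  have ht'pos : 0 < t' := by
    by_contra h
    push_neg at h
    have : ENNReal.ofReal t' = 0 := ENNReal.ofReal_eq_zero.2 h
    rw [this] at hRt'
    exact absurd hRt' (not_lt.2 zero_le)
  obtain ⟨r, hr0, hRr, hrt'⟩ := ENNReal.lt_iff_exists_real_btwn.1 hRt'
  have hrt'' : r < t' := by
    rw [ENNReal.ofReal_lt_ofReal_iff ht'pos] at hrt'
    exact hrt'
  set θ : ℝ := min (1/2) ((t' - r) / t') with hθ_def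
  have hθ0 : 0 < θ := lt_min (by norm_num) (div_pos (by linarith) ht'pos)
  have hθ12 : θ ≤ 1/2 := min_le_left _ _
  have hkey : r ≤ (1 - θ) * t' := by
    have h1 : θ * t' ≤ t' - r := by
      have h2 : θ ≤ (t' - r) / t' := min_le_right _ _
      calc θ * t' ≤ (t' - r) / t' * t' := mul_le_mul_of_nonneg_right h2 ht'pos.le
      _ = t' - r := by field_simp
    nlinarith
  have := hstep θ hθ0 hθ12
  have hcontra : ENNReal.ofReal r ≤ R := (ENNReal.ofReal_le_ofReal hkey).trans this
  exact absurd hRr (not_lt.2 hcontra)
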